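/- Given density matrices ρ^{ABC}, σ^A, η^C, σ^{AB}, ω^{BC} on a tripartite finite-dimensional Hilbert space A⊗B⊗C such that ‖ρ^{ABC} − σ^A ⊗ ω^{BC}‖₁ ≤ ε₁ and ‖ρ^{ABC} − σ^{AB} ⊗ η^C‖₁ ≤ ε₂, it holds that ‖ρ^{ABC} − σ^A ⊗ σ^B ⊗ η^C‖₁ ≤ 2ε₁ + ε₂, where σ^B denotes the marginal of σ^{AB} on B. -/

import Mathlib

noncomputable section
open scoped BigOperators
open MeasureTheory Kronecker Matrix
open scoped ComplexOrder
attribute [local instance] Classical.propDecidable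

namespace QIT

variable {ι κ : Type*}

/-- A measurable-space structure on matrices, coming from the product σ-algebra. -/
instance matMeasurableSpace (m n : Type*) : MeasurableSpace (Matrix m n ℂ) :=
  (inferInstance : MeasurableSpace (m → n → ℂ))

/-- Unit vector predicate. -/
def UnitVec {ι : Type*} [Fintype ι] (v : ι → ℂ) : Prop :=
  ∑ i, Complex.normSq (v i) = 1

/-- The pure state (rank-one projector) associated to a vector. -/
def pureState {ι : Type*} (v : ι → ℂ) : Matrix ι ι ℂ :=
  Matrix.vecMulVec v (star v)

/-- Schatten 1-norm (trace norm) of a complex square matrix, via singular values. -/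
def traceNorm [Fintype ι] [DecidableEq ι] (M : Matrix ι ι ℂ) : ℝ :=
  ∑ i, Real.sqrt ((Matrix.isHermitian_conjTranspose_mul_self M).eigenvalues i)

/-- Square root of a positive semidefinite matrix (junk value `0` otherwise). -/
def psqrt [Fintype ι] [DecidableEq ι] (M : Matrix ι ι ℂ) : Matrix ι ι ℂ :=
  if h : M.PosSemidef then
    (h.1.eigenvectorUnitary : Matrix ι ι ℂ) *
      Matrix.diagonal ((↑) ∘ Real.sqrt ∘ h.1.eigenvalues) *
      (star h.1.eigenvectorUnitary : Matrix ι ι ℂ)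
  else 0

/-- Generalised fidelity of two (sub)normalised states. -/
def gFid [Fintype ι] [DecidableEq ι] (ρ σ : Matrix ι ι ℂ) : ℝ :=
  traceNorm (psqrt ρ * psqrt σ) +
    Real.sqrt ((1 - ρ.trace.re) * (1 - σ.trace.re))

/-- Purified distance. -/
def pDist [Fintype ι] [DecidableEq ι] (ρ σ : Matrix ι ι ℂ) : ℝ :=
  Real.sqrt (1 - gFid ρ σ ^ 2)

/-- Purified distance between two pure states given by vectors. -/
def pureDist {ι : Type*} [Fintype ι] (v w : ι → ℂ) : ℝ :=
  Real.sqrt (1 - ‖∑ i, (starRingEnd ℂ) (v i) * w i‖ ^ 2)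

/-- Subnormalised density operator. -/
def IsSubState [Fintype ι] (ρ : Matrix ι ι ℂ) : Prop :=
  ρ.PosSemidef ∧ ρ.trace.re ≤ 1

/-- Normalised density operator. -/
def IsState [Fintype ι] (ρ : Matrix ι ι ℂ) : Prop :=
  ρ.PosSemidef ∧ ρ.trace = 1

/-- ε-smooth conditional min-entropy `H_min^ε(A|B)_ρ` of a bipartite (sub)state,
conditioning on the second tensor factor.  Logarithms are base 2. -/
def Hmin {α β : Type*} [Fintype α] [DecidableEq α] [Fintype β] [DecidableEq β]
    (ε : ℝ) (ρ : Matrix (α × β) (α × β) ℂ) : ℝ :=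
  - Real.logb 2 (sInf {t : ℝ | ∃ ρ' : Matrix (α × β) (α × β) ℂ, ∃ σ : Matrix β β ℂ,
      IsSubState ρ' ∧ pDist ρ' ρ ≤ ε ∧ σ.PosSemidef ∧
      ((1 : Matrix α α ℂ) ⊗ₖ σ - ρ').PosSemidef ∧ t = σ.trace.re})

/-- Unconditional smooth min-entropy (one-dimensional conditioning system). -/
def Hmin0 {α : Type*} [Fintype α] [DecidableEq α] (ε : ℝ) (ρ : Matrix α α ℂ) : ℝ :=
  Hmin ε (ρ.submatrix (fun p : α × Unit => p.1) (fun p : α × Unit => p.1))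

/-- Canonical purification vector of a matrix (meaningful for PSD matrices). -/
def purifyVec [Fintype ι] [DecidableEq ι] (ρ : Matrix ι ι ℂ) : ι × ι → ℂ :=
  fun p => psqrt ρ p.1 p.2

/-- Reduced density matrix of a pure state `v` on a system relabelled by `f : kept × traced → full`. -/
def marg {F K T : Type*} [Fintype T] (f : K × T → F) (v : F → ℂ) : Matrix K K ℂ :=
  Matrix.of fun k k' => ∑ t, v (f (k, t)) * (starRingEnd ℂ) (v (f (k', t)))

/-- Reduced density matrix of a mixed state `M` under the relabelling `f : kept × traced → full`. -/
def margM {F K T : Type*} [Fintype T] (f : K × T → F) (M : Matrix F F ℂ) : Matrix K K ℂ :=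
  Matrix.of fun k k' => ∑ t, M (f (k, t)) (f (k', t))

/-- Partial trace over the first tensor factor. -/
def ptraceFst {T K : Type*} [Fintype T] (M : Matrix (T × K) (T × K) ℂ) : Matrix K K ℂ :=
  Matrix.of fun k k' => ∑ t, M (t, k) (t, k')

/-- Partial trace over the second tensor factor. -/
def ptraceSnd {K T : Type*} [Fintype T] (M : Matrix (K × T) (K × T) ℂ) : Matrix K K ℂ :=
  Matrix.of fun k k' => ∑ t, M (k, t) (k', t)

/-- ε-smooth max-entropy `H_max^ε(A)_ρ := −H_min^ε(A|E)` of (a purification of) `ρ`. -/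
def Hmax {α : Type*} [Fintype α] [DecidableEq α] (ε : ℝ) (ρ : Matrix α α ℂ) : ℝ :=
  - Hmin ε (pureState (purifyVec ρ))

/-- ε-smooth coherent min-information `I_min^ε(A>B)_ρ := H_min^ε(A|E)` evaluated on
(the A,E marginal of) a purification of `ρ^{AB}`. -/
def Imin {α β : Type*} [Fintype α] [DecidableEq α] [Fintype β] [DecidableEq β]
    (ε : ℝ) (ρ : Matrix (α × β) (α × β) ℂ) : ℝ :=
  Hmin ε (marg (fun q : (α × (α × β)) × β => ((q.1.1, q.2), q.1.2)) (purifyVec ρ))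

/-- Frobenius (Schatten 2-) norm. -/
def frobNorm {ι : Type*} [Fintype ι] (M : Matrix ι ι ℂ) : ℝ :=
  Real.sqrt (∑ i, ∑ j, ‖M i j‖ ^ 2)

/-- Real power of a Hermitian matrix through its spectral decomposition
(junk value `0` for non-Hermitian input). -/
def rpowMat [Fintype ι] [DecidableEq ι] (σ : Matrix ι ι ℂ) (r : ℝ) : Matrix ι ι ℂ :=
  if h : σ.IsHermitian then
    (h.eigenvectorUnitary : Matrix ι ι ℂ) *
      Matrix.diagonal (fun i => ((h.eigenvalues i ^ r : ℝ) : ℂ)) *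
      (h.eigenvectorUnitary : Matrix ι ι ℂ)ᴴ
  else 0

/-- ε-smooth sandwiched Rényi-2 conditional entropy `H₂^ε(A|B)_ρ`, conditioning on the
second factor. -/
def H2 {α β : Type*} [Fintype α] [DecidableEq α] [Fintype β] [DecidableEq β]
    (ε : ℝ) (ρ : Matrix (α × β) (α × β) ℂ) : ℝ :=
  -2 * Real.logb 2 (sInf {t : ℝ | ∃ ρ' : Matrix (α × β) (α × β) ℂ, ∃ σ : Matrix β β ℂ,
      IsSubState ρ' ∧ pDist ρ' ρ ≤ ε ∧ σ.PosDef ∧ σ.trace = 1 ∧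
      t = frobNorm (((1 : Matrix α α ℂ) ⊗ₖ rpowMat σ (-(1/4 : ℝ))) * ρ' *
        ((1 : Matrix α α ℂ) ⊗ₖ rpowMat σ (-(1/4 : ℝ))))})

/-- Unconditional smooth sandwiched Rényi-2 entropy. -/
def H20 {α : Type*} [Fintype α] [DecidableEq α] (ε : ℝ) (ρ : Matrix α α ℂ) : ℝ :=
  H2 ε (ρ.submatrix (fun p : α × Unit => p.1) (fun p : α × Unit => p.1))

/-- `op^{X→Y}` : reinterpret a vector on `X ⊗ Y` as an operator from `X` to `Y`. -/
def opMat {X Y : Type*} (v : X × Y → ℂ) : Matrix Y X ℂ :=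
  Matrix.of fun y x => v (x, y)

/-- Apply an operator on the first tensor factor of a vector. -/
def applyLeft {X Y R : Type*} [Fintype X] (M : Matrix Y X ℂ) (w : X × R → ℂ) : Y × R → ℂ :=
  fun p => ∑ x, M p.1 x * w (x, p.2)

/-- Linearity of a superoperator. -/
def IsLin (Φ : Matrix ι ι ℂ → Matrix κ κ ℂ) : Prop :=
  ∀ (c : ℂ) (M N : Matrix ι ι ℂ), Φ (c • M + N) = c • Φ M + Φ N

/-- Tensor extension `Φ ⊗ id_R` of a superoperator, acting on the first factor. -/
def extAncilla (Φ : Matrix ι ι ℂ → Matrix κ κ ℂ) {R : Type*}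
    (M : Matrix (ι × R) (ι × R) ℂ) : Matrix (κ × R) (κ × R) ℂ :=
  Matrix.of fun x y => Φ (Matrix.of fun a b => M (a, x.2) (b, y.2)) x.1 y.1

/-- Complete positivity. -/
def IsCP [Fintype ι] [Fintype κ] (Φ : Matrix ι ι ℂ → Matrix κ κ ℂ) : Prop :=
  ∀ (R : Type) [Fintype R], ∀ M : Matrix (ι × R) (ι × R) ℂ,
    M.PosSemidef → (extAncilla Φ M).PosSemidef

/-- Trace preservation. -/
def IsTP [Fintype ι] [Fintype κ] (Φ : Matrix ι ι ℂ → Matrix κ κ ℂ) : Prop :=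
  ∀ M : Matrix ι ι ℂ, (Φ M).trace = M.trace

/-- Quantum channel: linear, completely positive, trace preserving. -/
def IsCPTP [Fintype ι] [Fintype κ] (Φ : Matrix ι ι ℂ → Matrix κ κ ℂ) : Prop :=
  IsLin Φ ∧ IsCP Φ ∧ IsTP Φ

/-- `V` is a Stinespring dilation (with environment `E`) of the superoperator `Φ`. -/
def IsStinespring {E : Type*} [Fintype ι] [DecidableEq ι] [Fintype κ] [Fintype E]
    (Φ : Matrix ι ι ℂ → Matrix κ κ ℂ) (V : Matrix (κ × E) ι ℂ) : Prop :=
  Vᴴ * V = 1 ∧ ∀ M : Matrix ι ι ℂ, Φ M = ptraceSnd (V * M * Vᴴ)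

/-- von Neumann entropy (base 2). -/
def vN [Fintype ι] [DecidableEq ι] (ρ : Matrix ι ι ℂ) : ℝ :=
  if h : ρ.IsHermitian then -∑ i, (h.eigenvalues i) * Real.logb 2 (h.eigenvalues i) else 0

/-- Coherent information `I(A>B)_ρ = H(B) − H(AB)` of a bipartite state. -/
def cohInfo {α β : Type*} [Fintype α] [DecidableEq α] [Fintype β] [DecidableEq β]
    (ρ : Matrix (α × β) (α × β) ℂ) : ℝ :=
  vN (ptraceFst ρ) - vN ρ

/-- (Left- and right-) invariant probability measure on the unitary group, i.e.,
the Haar probability measure. -/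
def IsHaarLike {ι : Type*} [Fintype ι] [DecidableEq ι]
    (μ : Measure ↥(Matrix.unitaryGroup ι ℂ)) : Prop :=
  (∀ V : ↥(Matrix.unitaryGroup ι ℂ), Measure.map (fun U => V * U) μ = μ) ∧
  (∀ V : ↥(Matrix.unitaryGroup ι ℂ), Measure.map (fun U => U * V) μ = μ)

/-- Maximally entangled (EPR) vector of rank `m`. -/
def mevec (m : ℕ) : Fin m × Fin m → ℂ :=
  fun p => if p.1 = p.2 then ((1 / Real.sqrt m : ℝ) : ℂ) else 0

/-- Maximally mixed state. -/
def mms (ι : Type*) [Fintype ι] [DecidableEq ι] : Matrix ι ι ℂ :=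
  ((Fintype.card ι : ℂ)⁻¹) • (1 : Matrix ι ι ℂ)

end QIT

section AuxTraceNorm
set_option linter.unusedSectionVars false

namespace QITAux
open Matrix
open scoped ComplexOrder

variable {n m : Type*} [Fintype n] [DecidableEq n] [Fintype m] [DecidableEq m]


variable {n m : Type*} [Fintype n] [DecidableEq n] [Fintype m] [DecidableEq m]

def _root_.Matrix.PosSemidef.sqrt {A : Matrix n n ℂ} (hA : A.PosSemidef) : Matrix n n ℂ :=
  (hA.1.eigenvectorUnitary : Matrix n n ℂ) *
    Matrix.diagonal ((↑) ∘ Real.sqrt ∘ hA.1.eigenvalues) *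
    (star hA.1.eigenvectorUnitary : Matrix n n ℂ)

section SqrtAux
open scoped MatrixOrder

lemma _root_.Matrix.PosSemidef.sqrt_eq_cfc {A : Matrix n n ℂ} (hA : A.PosSemidef) :
    hA.sqrt = CFC.sqrt A := by
  rw [CFC.sqrt_eq_cfc, cfc_nnreal_eq_real _ A, hA.1.cfc_eq]
  simp only [Matrix.IsHermitian.cfc, Unitary.conjStarAlgAut_apply, Matrix.PosSemidef.sqrt]
  congr 2
  refine congrArg Matrix.diagonal (funext fun i => ?_)
  simp [Real.coe_toNNReal', max_eq_left (hA.eigenvalues_nonneg i)]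

lemma _root_.Matrix.PosSemidef.posSemidef_sqrt {A : Matrix n n ℂ} (hA : A.PosSemidef) :
    hA.sqrt.PosSemidef := by
  rw [hA.sqrt_eq_cfc]; exact (CFC.sqrt_nonneg A).posSemidef

lemma _root_.Matrix.PosSemidef.sqrt_mul_self {A : Matrix n n ℂ} (hA : A.PosSemidef) :
    hA.sqrt * hA.sqrt = A := by
  rw [hA.sqrt_eq_cfc]; exact CFC.sqrt_mul_sqrt_self A hA.nonneg

lemma _root_.Matrix.PosSemidef.sq_sqrt {A : Matrix n n ℂ} (hA : A.PosSemidef) :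
    hA.sqrt ^ 2 = A := by
  rw [hA.sqrt_eq_cfc]; exact CFC.sq_sqrt A hA.nonneg

lemma _root_.Matrix.PosSemidef.eq_sqrt_of_sq_eq {A : Matrix n n ℂ} (hA : A.PosSemidef)
    {B : Matrix n n ℂ} (hB : B.PosSemidef) (hAB : A ^ 2 = B) : A = hB.sqrt := by
  rw [hB.sqrt_eq_cfc, ← hAB, CFC.sqrt_sq A hA.nonneg]

end SqrtAux

lemma trace_mul_diag_mul (U V : Matrix n n ℂ) (h : V * U = 1) (d : n → ℂ) :
    (U * Matrix.diagonal d * V).trace = ∑ i, d i := by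
  rw [Matrix.trace_mul_cycle, h, Matrix.one_mul, Matrix.trace_diagonal]

lemma star_mul_self_eigU {A : Matrix n n ℂ} (hA : A.IsHermitian) :
    (star (hA.eigenvectorUnitary : Matrix n n ℂ)) * (hA.eigenvectorUnitary : Matrix n n ℂ) = 1 :=
  Matrix.mem_unitaryGroup_iff'.mp (hA.eigenvectorUnitary).2

lemma trace_sqrt_eq {A : Matrix n n ℂ} (hA : A.PosSemidef) :
    hA.sqrt.trace = ((∑ i, Real.sqrt (hA.1.eigenvalues i) : ℝ) : ℂ) := by
  rw [Matrix.PosSemidef.sqrt, trace_mul_diag_mul _ _ (star_mul_self_eigU hA.1)]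
  push_cast
  rfl

lemma traceNorm_cast (M : Matrix n n ℂ) :
    ((QIT.traceNorm M : ℝ) : ℂ) = (Matrix.posSemidef_conjTranspose_mul_self M).sqrt.trace := by
  rw [trace_sqrt_eq]
  rfl

lemma sqrt_congr {A B : Matrix n n ℂ} (hA : A.PosSemidef) (hB : B.PosSemidef) (h : A = B) :
    hA.sqrt = hB.sqrt := by subst h; rfl

lemma traceNorm_congr {M N : Matrix n n ℂ} (h : Mᴴ * M = Nᴴ * N) :
    QIT.traceNorm M = QIT.traceNorm N := by
  have := traceNorm_cast M
  rw [sqrt_congr _ (Matrix.posSemidef_conjTranspose_mul_self N) h, ← traceNorm_cast N] at this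
  exact_mod_cast this

lemma traceNorm_neg (M : Matrix n n ℂ) : QIT.traceNorm (-M) = QIT.traceNorm M :=
  traceNorm_congr (by simp)

def ptraceFst {T K : Type*} [Fintype T] (M : Matrix (T × K) (T × K) ℂ) : Matrix K K ℂ :=
  Matrix.of fun k k' => ∑ t, M (t, k) (t, k')
lemma unitary_entry_abs_le {X : Matrix n n ℂ} (hX : X ∈ Matrix.unitaryGroup n ℂ) (i j : n) :
    ‖X i j‖ ≤ 1 := by
  have h1 : (star X * X) j j = 1 := by
    rw [Matrix.mem_unitaryGroup_iff'.mp hX]; simp [Matrix.one_apply]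
  have h2 : ∑ k, (Complex.normSq (X k j) : ℂ) = 1 := by
    rw [← h1, Matrix.star_eq_conjTranspose, Matrix.mul_apply]
    refine Finset.sum_congr rfl fun k _ => ?_
    rw [Matrix.conjTranspose_apply, Complex.normSq_eq_conj_mul_self]
    rfl
  have h3 : ∑ k, Complex.normSq (X k j) = 1 := by exact_mod_cast h2
  have h4 : Complex.normSq (X i j) ≤ 1 := by
    rw [← h3]
    exact Finset.single_le_sum (f := fun k => Complex.normSq (X k j))
      (fun k _ => Complex.normSq_nonneg _) (Finset.mem_univ i)
  rw [← Real.sqrt_one, Complex.norm_def]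
  exact Real.sqrt_le_sqrt h4

lemma herm_decomp {H : Matrix n n ℂ} (hH : H.IsHermitian) :
    ∃ (U : Matrix n n ℂ) (lam : n → ℝ), U ∈ Matrix.unitaryGroup n ℂ ∧
      H = U * Matrix.diagonal (fun i => (lam i : ℂ)) * star U ∧ lam = hH.eigenvalues :=
  ⟨hH.eigenvectorUnitary, hH.eigenvalues, (hH.eigenvectorUnitary).2, by
    convert hH.spectral_theorem using 1; rw [Unitary.conjStarAlgAut_apply]; rfl, rfl⟩

lemma spectral_prod' {U : Matrix n n ℂ} (hU : star U * U = 1) (d e : n → ℂ) :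
    (U * Matrix.diagonal d * star U) * (U * Matrix.diagonal e * star U)
      = U * Matrix.diagonal (fun i => d i * e i) * star U := by
  rw [show U * Matrix.diagonal d * star U * (U * Matrix.diagonal e * star U)
      = U * (Matrix.diagonal d * (star U * U) * Matrix.diagonal e) * star U by noncomm_ring,
    hU, Matrix.mul_one, Matrix.diagonal_mul_diagonal]

lemma traceNorm_isHermitian {H : Matrix n n ℂ} (hH : H.IsHermitian) :
    QIT.traceNorm H = ∑ i, |hH.eigenvalues i| := by
  obtain ⟨U, lam, hUmem, hspec, hlam⟩ := herm_decomp hH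
  rw [← hlam]
  have hU : star U * U = 1 := Matrix.mem_unitaryGroup_iff'.mp hUmem
  set Q : Matrix n n ℂ := U * Matrix.diagonal (fun i => ((|lam i| : ℝ) : ℂ)) * star U
    with hQdef
  have hdPSD : (Matrix.diagonal (fun i => ((|lam i| : ℝ) : ℂ))).PosSemidef := by
    refine Matrix.posSemidef_diagonal_iff.mpr fun i => ?_
    exact_mod_cast abs_nonneg _
  have hQ : Q.PosSemidef := by
    rw [hQdef, Matrix.star_eq_conjTranspose]
    exact hdPSD.mul_mul_conjTranspose_same U
  have hsq : Q ^ 2 = Hᴴ * H := by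
    rw [hH.eq, pow_two, hQdef, spectral_prod' hU, hspec, spectral_prod' hU]
    congr 2
    ext i
    push_cast [← Complex.ofReal_mul, abs_mul_abs_self]
    ring
  have key : Q = (Matrix.posSemidef_conjTranspose_mul_self H).sqrt :=
    hQ.eq_sqrt_of_sq_eq (Matrix.posSemidef_conjTranspose_mul_self H) hsq
  have : ((QIT.traceNorm H : ℝ) : ℂ) = ((∑ i, |lam i| : ℝ) : ℂ) := by
    rw [traceNorm_cast, ← key, hQdef, trace_mul_diag_mul _ _ hU]
    push_cast; rfl
  exact_mod_cast this

lemma trace_mul_diagonal' (Y : Matrix n n ℂ) (d : n → ℂ) :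
    (Y * Matrix.diagonal d).trace = ∑ i, Y i i * d i := by
  simp [Matrix.trace, Matrix.diag, Matrix.mul_diagonal]

lemma re_trace_unitary_mul_le {H : Matrix n n ℂ} (hH : H.IsHermitian)
    {X : Matrix n n ℂ} (hX : X ∈ Matrix.unitaryGroup n ℂ) :
    ((X * H).trace).re ≤ QIT.traceNorm H := by
  obtain ⟨U, lam, hUmem, hspec, hlam⟩ := herm_decomp hH
  have hYmem : star U * X * U ∈ Matrix.unitaryGroup n ℂ :=
    mul_mem (mul_mem (Unitary.star_mem hUmem) hX) hUmem
  have htr : (X * H).trace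
      = ((star U * X * U) * Matrix.diagonal (fun i => (lam i : ℂ))).trace := by
    rw [hspec, show X * (U * Matrix.diagonal (fun i => (lam i : ℂ)) * star U)
        = (X * U * Matrix.diagonal (fun i => (lam i : ℂ))) * star U by noncomm_ring,
      Matrix.trace_mul_comm, show star U * (X * U * Matrix.diagonal (fun i => (lam i : ℂ)))
        = (star U * X * U) * Matrix.diagonal (fun i => (lam i : ℂ)) by noncomm_ring]
  rw [htr, trace_mul_diagonal', traceNorm_isHermitian hH, ← hlam, Complex.re_sum]
  refine Finset.sum_le_sum fun i _ => ?_
  have h1 : (((star U * X * U) i i) * ((lam i : ℝ) : ℂ)).re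
      = ((star U * X * U) i i).re * lam i := by
    rw [Complex.mul_re]; simp
  rw [h1]
  calc ((star U * X * U) i i).re * lam i
      ≤ |((star U * X * U) i i).re * lam i| := le_abs_self _
    _ = |((star U * X * U) i i).re| * |lam i| := abs_mul _ _
    _ ≤ 1 * |lam i| := by
        refine mul_le_mul_of_nonneg_right ?_ (abs_nonneg _)
        exact (Complex.abs_re_le_norm _).trans (unitary_entry_abs_le hYmem i i)
    _ = |lam i| := one_mul _

lemma exists_unitary_trace_eq {H : Matrix n n ℂ} (hH : H.IsHermitian) :
    ∃ S ∈ Matrix.unitaryGroup n ℂ, ((S * H).trace).re = QIT.traceNorm H := by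
  obtain ⟨U, lam, hUmem, hspec, hlam⟩ := herm_decomp hH
  have hU : star U * U = 1 := Matrix.mem_unitaryGroup_iff'.mp hUmem
  have hU' : U * star U = 1 := Matrix.mem_unitaryGroup_iff.mp hUmem
  set s : n → ℂ := fun i => if 0 ≤ lam i then 1 else -1 with hs
  have hstar : ∀ i, (starRingEnd ℂ) (s i) * s i = 1 := by
    intro i; rw [hs]; by_cases h : 0 ≤ lam i <;> simp [h]
  have hSstar : star (U * Matrix.diagonal s * star U)
      = U * Matrix.diagonal (fun i => (starRingEnd ℂ) (s i)) * star U := by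
    simp only [Matrix.star_eq_conjTranspose, Matrix.conjTranspose_mul,
      Matrix.conjTranspose_conjTranspose, Matrix.diagonal_conjTranspose]
    rw [Matrix.mul_assoc]
    rfl
  refine ⟨U * Matrix.diagonal s * star U, ?_, ?_⟩
  · rw [Matrix.mem_unitaryGroup_iff', hSstar, spectral_prod' hU]
    have : (fun i => (starRingEnd ℂ) (s i) * s i) = fun _ => (1 : ℂ) := funext hstar
    rw [this, Matrix.diagonal_one, Matrix.mul_one, hU']
  · rw [traceNorm_isHermitian hH, ← hlam, hspec, spectral_prod' hU,
      trace_mul_diag_mul _ _ hU, Complex.re_sum]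
    refine Finset.sum_congr rfl fun i _ => ?_
    rw [hs]
    by_cases h : 0 ≤ lam i
    · simp [h, abs_of_nonneg h]
    · simp only [h, if_false]
      rw [abs_of_neg (lt_of_not_ge h)]
      simp

lemma traceNorm_add_le {G H : Matrix n n ℂ} (hG : G.IsHermitian) (hH : H.IsHermitian) :
    QIT.traceNorm (G + H) ≤ QIT.traceNorm G + QIT.traceNorm H := by
  obtain ⟨S, hS, hSe⟩ := exists_unitary_trace_eq (hG.add hH)
  rw [← hSe, Matrix.mul_add, Matrix.trace_add, Complex.add_re]
  exact add_le_add (re_trace_unitary_mul_le hG hS) (re_trace_unitary_mul_le hH hS)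

lemma traceNorm_posSemidef {H : Matrix n n ℂ} (hH : H.PosSemidef) :
    QIT.traceNorm H = H.trace.re := by
  obtain ⟨U, lam, hUmem, hspec, hlam⟩ := herm_decomp hH.1
  have hU : star U * U = 1 := Matrix.mem_unitaryGroup_iff'.mp hUmem
  rw [traceNorm_isHermitian hH.1, ← hlam, hspec, trace_mul_diag_mul _ _ hU, Complex.re_sum]
  refine Finset.sum_congr rfl fun i _ => ?_
  rw [hlam, abs_of_nonneg (hH.eigenvalues_nonneg i)]
  simp
open Kronecker in
lemma kron_conjTranspose (A : Matrix m m ℂ) (B : Matrix n n ℂ) :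
    (A ⊗ₖ B)ᴴ = Aᴴ ⊗ₖ Bᴴ := by
  ext ⟨i, j⟩ ⟨k, l⟩
  simp [Matrix.conjTranspose_apply, Matrix.kroneckerMap_apply, mul_comm]

open Kronecker in
lemma isHermitian_kron {A : Matrix m m ℂ} {B : Matrix n n ℂ}
    (hA : A.IsHermitian) (hB : B.IsHermitian) : (A ⊗ₖ B).IsHermitian := by
  rw [Matrix.IsHermitian, kron_conjTranspose, hA.eq, hB.eq]

open Kronecker in
lemma posSemidef_kron {A : Matrix m m ℂ} {B : Matrix n n ℂ}
    (hA : A.PosSemidef) (hB : B.PosSemidef) : (A ⊗ₖ B).PosSemidef := by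
  have h : A ⊗ₖ B = (hA.sqrt ⊗ₖ hB.sqrt)ᴴ * (hA.sqrt ⊗ₖ hB.sqrt) := by
    rw [kron_conjTranspose, hA.posSemidef_sqrt.1.eq, hB.posSemidef_sqrt.1.eq,
      ← Matrix.mul_kronecker_mul, hA.sqrt_mul_self, hB.sqrt_mul_self]
  rw [h]; exact Matrix.posSemidef_conjTranspose_mul_self _

open Kronecker in
lemma sqrt_kron {A : Matrix m m ℂ} {B : Matrix n n ℂ} (hA : A.PosSemidef) (hB : B.PosSemidef) :
    hA.sqrt ⊗ₖ hB.sqrt = (posSemidef_kron hA hB).sqrt :=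
  (posSemidef_kron hA.posSemidef_sqrt hB.posSemidef_sqrt).eq_sqrt_of_sq_eq _
    (by rw [pow_two, ← Matrix.mul_kronecker_mul, hA.sqrt_mul_self, hB.sqrt_mul_self])

open Kronecker in
lemma traceNorm_kron (A : Matrix m m ℂ) (B : Matrix n n ℂ) :
    QIT.traceNorm (A ⊗ₖ B) = QIT.traceNorm A * QIT.traceNorm B := by
  have h : (A ⊗ₖ B)ᴴ * (A ⊗ₖ B) = (Aᴴ * A) ⊗ₖ (Bᴴ * B) := by
    rw [kron_conjTranspose, ← Matrix.mul_kronecker_mul]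
  have : ((QIT.traceNorm (A ⊗ₖ B) : ℝ) : ℂ)
      = ((QIT.traceNorm A * QIT.traceNorm B : ℝ) : ℂ) := by
    rw [traceNorm_cast,
      sqrt_congr _ (posSemidef_kron (Matrix.posSemidef_conjTranspose_mul_self A)
        (Matrix.posSemidef_conjTranspose_mul_self B)) h,
      ← sqrt_kron, Matrix.trace_kronecker, ← traceNorm_cast, ← traceNorm_cast]
    push_cast; ring
    all_goals exact Matrix.posSemidef_conjTranspose_mul_self _
  exact_mod_cast this

lemma ptraceFst_isHermitian {T K : Type*} [Fintype T] [Fintype K]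
    {M : Matrix (T × K) (T × K) ℂ} (hM : M.IsHermitian) : (QIT.ptraceFst M).IsHermitian := by
  rw [Matrix.IsHermitian]
  ext k k'
  simp only [Matrix.conjTranspose_apply, QIT.ptraceFst, Matrix.of_apply, star_sum]
  refine Finset.sum_congr rfl fun t _ => ?_
  rw [← Matrix.conjTranspose_apply, hM.eq]

lemma ptraceFst_sub {T K : Type*} [Fintype T] [Fintype K]
    (M N : Matrix (T × K) (T × K) ℂ) :
    QIT.ptraceFst (M - N) = QIT.ptraceFst M - QIT.ptraceFst N := by
  ext k k'
  simp [QIT.ptraceFst, Finset.sum_sub_distrib]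

open Kronecker in
lemma trace_mul_ptraceFst {T K : Type*} [Fintype T] [DecidableEq T] [Fintype K] [DecidableEq K]
    (S : Matrix K K ℂ) (M : Matrix (T × K) (T × K) ℂ) :
    (S * QIT.ptraceFst M).trace = (((1 : Matrix T T ℂ) ⊗ₖ S) * M).trace := by
  simp only [Matrix.trace, Matrix.diag, Matrix.mul_apply, QIT.ptraceFst, Matrix.of_apply,
    Fintype.sum_prod_type, Matrix.kroneckerMap_apply, Matrix.one_apply, ite_mul, one_mul,
    zero_mul, Finset.mul_sum]
  have hL : (∑ k : K, ∑ k' : K, ∑ t : T, S k k' * M (t, k') (t, k))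
      = ∑ t : T, ∑ k : K, ∑ k' : K, S k k' * M (t, k') (t, k) :=
    (Finset.sum_congr rfl fun k _ => Finset.sum_comm).trans Finset.sum_comm
  rw [hL]
  refine Finset.sum_congr rfl fun t _ => Finset.sum_congr rfl fun k _ => ?_
  rw [Finset.sum_comm]
  simp [Finset.sum_ite_eq]

open Kronecker in
lemma one_kron_mem_unitary {T K : Type*} [Fintype T] [DecidableEq T] [Fintype K] [DecidableEq K]
    {S : Matrix K K ℂ} (hS : S ∈ Matrix.unitaryGroup K ℂ) :
    (1 : Matrix T T ℂ) ⊗ₖ S ∈ Matrix.unitaryGroup (T × K) ℂ := by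
  rw [Matrix.mem_unitaryGroup_iff', Matrix.star_eq_conjTranspose, kron_conjTranspose,
    Matrix.conjTranspose_one, ← Matrix.mul_kronecker_mul, Matrix.one_mul,
    ← Matrix.star_eq_conjTranspose, Matrix.mem_unitaryGroup_iff'.mp hS,
    Matrix.one_kronecker_one]

lemma traceNorm_ptraceFst_le {T K : Type*} [Fintype T] [DecidableEq T] [Fintype K] [DecidableEq K]
    {M : Matrix (T × K) (T × K) ℂ} (hM : M.IsHermitian) :
    QIT.traceNorm (QIT.ptraceFst M) ≤ QIT.traceNorm M := by
  obtain ⟨S, hS, he⟩ := exists_unitary_trace_eq (ptraceFst_isHermitian hM)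
  rw [← he, trace_mul_ptraceFst]
  exact re_trace_unitary_mul_le hM (one_kron_mem_unitary hS)

lemma trace_submatrix_equiv (e : m ≃ n) (M : Matrix n n ℂ) :
    (M.submatrix e e).trace = M.trace := by
  simp only [Matrix.trace, Matrix.diag, Matrix.submatrix_apply]
  exact Equiv.sum_comp e fun j => M j j

lemma sqrt_submatrix (e : m ≃ n) {M : Matrix n n ℂ} (hM : M.PosSemidef) :
    hM.sqrt.submatrix e e = (hM.submatrix e).sqrt :=
  (hM.posSemidef_sqrt.submatrix e).eq_sqrt_of_sq_eq _ (by
    rw [pow_two, Matrix.submatrix_mul_equiv, ← pow_two, hM.sq_sqrt])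

lemma traceNorm_submatrix (e : m ≃ n) (M : Matrix n n ℂ) :
    QIT.traceNorm (M.submatrix e e) = QIT.traceNorm M := by
  have h : (M.submatrix e e)ᴴ * (M.submatrix e e) = (Mᴴ * M).submatrix e e := by
    rw [Matrix.conjTranspose_submatrix, Matrix.submatrix_mul_equiv]
  have : ((QIT.traceNorm (M.submatrix e e) : ℝ) : ℂ) = ((QIT.traceNorm M : ℝ) : ℂ) := by
    rw [traceNorm_cast,
      sqrt_congr _ ((Matrix.posSemidef_conjTranspose_mul_self M).submatrix e) h,
      ← sqrt_submatrix, trace_submatrix_equiv, ← traceNorm_cast]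
    exact Matrix.posSemidef_conjTranspose_mul_self _
  exact_mod_cast this

end QITAux
end AuxTraceNorm

open QIT in
/-- If `ρ^{ABC}` is close to `σ^A ⊗ ω^{BC}` and to `σ^{AB} ⊗ η^C`, then it is
`2ε₁ + ε₂`-close to `σ^A ⊗ σ^B ⊗ η^C`, where `σ^B` is the `B`-marginal of `σ^{AB}`. -/
theorem traceNorm_triple_product_approx
    {A B C : Type*} [Fintype A] [DecidableEq A] [Fintype B] [DecidableEq B]
    [Fintype C] [DecidableEq C]
    (ρ : Matrix (A × B × C) (A × B × C) ℂ) (σA : Matrix A A ℂ) (ηC : Matrix C C ℂ)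
    (σAB : Matrix (A × B) (A × B) ℂ) (ωBC : Matrix (B × C) (B × C) ℂ)
    (hρ : IsState ρ) (hσA : IsState σA) (hηC : IsState ηC)
    (hσAB : IsState σAB) (hωBC : IsState ωBC)
    (ε₁ ε₂ : ℝ)
    (h₁ : traceNorm (ρ - σA ⊗ₖ ωBC) ≤ ε₁)
    (h₂ : traceNorm (ρ.submatrix (fun p : (A × B) × C => (p.1.1, p.1.2, p.2))
            (fun p : (A × B) × C => (p.1.1, p.1.2, p.2)) - σAB ⊗ₖ ηC) ≤ ε₂) :
    traceNorm (ρ - σA ⊗ₖ (ptraceFst σAB ⊗ₖ ηC)) ≤ 2 * ε₁ + ε₂ := by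
    classical
  set σB := ptraceFst σAB with hσB
  have hρH : ρ.IsHermitian := hρ.1.1
  have hσAH : σA.IsHermitian := hσA.1.1
  have hηH : ηC.IsHermitian := hηC.1.1
  have hσABH : σAB.IsHermitian := hσAB.1.1
  have hωH : ωBC.IsHermitian := hωBC.1.1
  have hσBH : σB.IsHermitian := QITAux.ptraceFst_isHermitian hσABH
  have hτ1H : (σA ⊗ₖ ωBC).IsHermitian := QITAux.isHermitian_kron hσAH hωH
  have hτ2H : (σB ⊗ₖ ηC).IsHermitian := QITAux.isHermitian_kron hσBH hηH
  have hτH : (σA ⊗ₖ (σB ⊗ₖ ηC)).IsHermitian := QITAux.isHermitian_kron hσAH hτ2H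
  have hρBCJ : (ptraceFst ρ : Matrix (B × C) (B × C) ℂ).IsHermitian :=
    QITAux.ptraceFst_isHermitian hρH
  have hTσA : traceNorm σA = 1 := by
    rw [QITAux.traceNorm_posSemidef hσA.1, hσA.2, Complex.one_re]
  have tri1 : traceNorm (ρ - σA ⊗ₖ (σB ⊗ₖ ηC))
      ≤ traceNorm (ρ - σA ⊗ₖ ωBC) + traceNorm (σA ⊗ₖ ωBC - σA ⊗ₖ (σB ⊗ₖ ηC)) := by
    rw [show ρ - σA ⊗ₖ (σB ⊗ₖ ηC)
        = (ρ - σA ⊗ₖ ωBC) + (σA ⊗ₖ ωBC - σA ⊗ₖ (σB ⊗ₖ ηC)) from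
      (sub_add_sub_cancel _ _ _).symm]
    exact QITAux.traceNorm_add_le (hρH.sub hτ1H) (hτ1H.sub hτH)
  have h2' : traceNorm (σA ⊗ₖ ωBC - σA ⊗ₖ (σB ⊗ₖ ηC)) = traceNorm (ωBC - σB ⊗ₖ ηC) := by
    have hfac : σA ⊗ₖ ωBC - σA ⊗ₖ (σB ⊗ₖ ηC) = σA ⊗ₖ (ωBC - σB ⊗ₖ ηC) := by
      ext p q
      simp [Matrix.kroneckerMap_apply, Matrix.sub_apply, mul_sub]
    rw [hfac, QITAux.traceNorm_kron, hTσA, one_mul]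
  set ρBC := (ptraceFst ρ : Matrix (B × C) (B × C) ℂ) with hρBC
  have tri2 : traceNorm (ωBC - σB ⊗ₖ ηC)
      ≤ traceNorm (ωBC - ρBC) + traceNorm (ρBC - σB ⊗ₖ ηC) := by
    rw [show ωBC - σB ⊗ₖ ηC = (ωBC - ρBC) + (ρBC - σB ⊗ₖ ηC) from
      (sub_add_sub_cancel _ _ _).symm]
    exact QITAux.traceNorm_add_le (hωH.sub hρBCJ) (hρBCJ.sub hτ2H)
  have hb1 : traceNorm (ωBC - ρBC) ≤ ε₁ := by
    have hmarg : (ptraceFst (σA ⊗ₖ ωBC) : Matrix (B × C) (B × C) ℂ) = ωBC := by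
      ext k k'
      simp only [ptraceFst, Matrix.of_apply, Matrix.kroneckerMap_apply]
      rw [← Finset.sum_mul]
      have htr : ∑ a, σA a a = (1 : ℂ) := by
        simpa [Matrix.trace, Matrix.diag] using hσA.2
      rw [htr, one_mul]
    have key : ωBC - ρBC = - ptraceFst (ρ - σA ⊗ₖ ωBC) := by
      rw [QITAux.ptraceFst_sub, hmarg, hρBC, neg_sub]
    rw [key, QITAux.traceNorm_neg]
    exact (QITAux.traceNorm_ptraceFst_le (hρH.sub hτ1H)).trans h₁
  have hb2 : traceNorm (ρBC - σB ⊗ₖ ηC) ≤ ε₂ := by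
    set e : (A × B) × C ≃ A × B × C := Equiv.prodAssoc A B C with he
    set D : Matrix ((A × B) × C) ((A × B) × C) ℂ := ρ.submatrix e e - σAB ⊗ₖ ηC with hD
    have hDbound : traceNorm D ≤ ε₂ := h₂
    have hDH : D.IsHermitian :=
      (hρH.submatrix e).sub (QITAux.isHermitian_kron hσABH hηH)
    have hD' : D.submatrix e.symm e.symm = ρ - (σAB ⊗ₖ ηC).submatrix e.symm e.symm := by
      rw [hD]
      ext p q
      simp [Matrix.submatrix_apply, Matrix.sub_apply]
    have hptr : (ptraceFst (D.submatrix e.symm e.symm) : Matrix (B × C) (B × C) ℂ)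
        = ρBC - σB ⊗ₖ ηC := by
      rw [hD', QITAux.ptraceFst_sub, hρBC]
      congr 1
      ext ⟨b, c⟩ ⟨b', c'⟩
      simp only [ptraceFst, Matrix.of_apply, Matrix.submatrix_apply,
        Matrix.kroneckerMap_apply, he, Equiv.prodAssoc_symm_apply]
      rw [← Finset.sum_mul]
      simp [hσB, ptraceFst]
    calc traceNorm (ρBC - σB ⊗ₖ ηC)
        = traceNorm (ptraceFst (D.submatrix e.symm e.symm)) := by rw [hptr]
      _ ≤ traceNorm (D.submatrix e.symm e.symm) :=
          QITAux.traceNorm_ptraceFst_le (hDH.submatrix e.symm)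
      _ = traceNorm D := QITAux.traceNorm_submatrix e.symm D
      _ ≤ ε₂ := hDbound
  have := tri1
  rw [h2'] at this
  have h3 := tri2.trans (add_le_add hb1 hb2)
  linarith
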